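/- Let G be a group with a probability measure μ and let θ be a probability measure on G. If (1/n)‖Σ_{i=1}^n (θ*μ^{*i} − μ^{*i})‖_TV → 0 as n → ∞, then every bounded μ-harmonic function h with ‖h‖_∞ ≤ 1 satisfies (θ*h)(e) = h(e), where (θ*h)(g) = ∫_G h(gy) dθ(y). -/

import Mathlib

open MeasureTheory Filter ProbabilityTheory
open scoped ENNReal NNReal

noncomputable def mconv {G : Type*} [Mul G] [MeasurableSpace G] (μ ν : Measure G) : Measure G :=
  (μ.prod ν).map (fun p => p.1 * p.2)

noncomputable def mconvPow {G : Type*} [Monoid G] [MeasurableSpace G] (μ : Measure G) : ℕ → Measure G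
  | 0 => Measure.dirac 1
  | n+1 => mconv (mconvPow μ n) μ

noncomputable def tvDist {α : Type*} [MeasurableSpace α] (μ ν : Measure α) : ℝ :=
  ⨆ A : Set α, |(μ A).toReal - (ν A).toReal|

noncomputable def tildeMeasure {G : Type*} [Monoid G] [MeasurableSpace G] (μ : Measure G) : Measure G :=
  Measure.sum (fun n => ((2:ℝ≥0∞)^(n+1))⁻¹ • mconvPow μ n)



section Aux
open Set
variable {α : Type*} [MeasurableSpace α] (μ ν : Measure α) [IsFiniteMeasure μ] [IsFiniteMeasure ν]

lemma abs_le_tvDist (A : Set α) : |(μ A).toReal - (ν A).toReal| ≤ tvDist μ ν := by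
  refine le_ciSup (f := fun A : Set α => |(μ A).toReal - (ν A).toReal|) ?_ A
  refine ⟨(μ univ).toReal + (ν univ).toReal, ?_⟩
  rintro x ⟨B, rfl⟩
  have h1 : (μ B).toReal ≤ (μ univ).toReal :=
    ENNReal.toReal_mono (measure_ne_top _ _) (measure_mono (subset_univ B))
  have h2 : (ν B).toReal ≤ (ν univ).toReal :=
    ENNReal.toReal_mono (measure_ne_top _ _) (measure_mono (subset_univ B))
  have := ENNReal.toReal_nonneg (a := μ B)
  have := ENNReal.toReal_nonneg (a := ν B)
  rw [abs_le]; constructor <;> linarith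

lemma tvDist_nonneg : 0 ≤ tvDist μ ν :=
  le_trans (abs_nonneg _) (abs_le_tvDist μ ν ∅)

lemma integral_sub_le_tvDist {g : α → ℝ} (hg : Measurable g)
    (h0 : ∀ x, 0 ≤ g x) (h1 : ∀ x, g x ≤ 1) :
    |∫ x, g x ∂μ - ∫ x, g x ∂ν| ≤ tvDist μ ν := by
  have hgint : ∀ (ρ : Measure α) [IsFiniteMeasure ρ], Integrable g ρ := fun ρ _ =>
    (integrable_const (1:ℝ)).mono' hg.aestronglyMeasurable
      (Eventually.of_forall fun x => by rw [Real.norm_eq_abs, abs_of_nonneg (h0 x)]; exact h1 x)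
  have key : ∀ (ρ : Measure α) [IsFiniteMeasure ρ],
      ∫ x, g x ∂ρ = ∫ t in Ioc (0:ℝ) 1, (ρ {a | t ≤ g a}).toReal := fun ρ _ =>
    (hgint ρ).integral_eq_integral_Ioc_meas_le (Eventually.of_forall h0) (Eventually.of_forall h1)
  rw [key μ, key ν]
  have hmono : ∀ (ρ : Measure α), Measurable (fun t : ℝ => (ρ {a | t ≤ g a}).toReal) := by
    intro ρ
    have ha : Antitone (fun t : ℝ => ρ {a | t ≤ g a}) :=
      fun s t hst => measure_mono fun a ha => le_trans hst ha
    exact ha.measurable.ennreal_toReal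
  have hint : ∀ (ρ : Measure α) [IsFiniteMeasure ρ],
      IntegrableOn (fun t : ℝ => (ρ {a | t ≤ g a}).toReal) (Ioc 0 1) := by
    intro ρ _
    refine (integrableOn_const_iff (C := (ρ univ).toReal)).mpr (Or.inr measure_Ioc_lt_top)
      |>.mono' ((hmono ρ).aestronglyMeasurable) (Eventually.of_forall fun t => ?_)
    rw [Real.norm_eq_abs, abs_of_nonneg ENNReal.toReal_nonneg]
    exact ENNReal.toReal_mono (measure_ne_top _ _) (measure_mono (subset_univ _))
  rw [← integral_sub (hint μ) (hint ν)]
  calc |∫ t in Ioc (0:ℝ) 1, ((μ {a | t ≤ g a}).toReal - (ν {a | t ≤ g a}).toReal)|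
      ≤ ∫ t in Ioc (0:ℝ) 1, |(μ {a | t ≤ g a}).toReal - (ν {a | t ≤ g a}).toReal| :=
        by
        simpa [Real.norm_eq_abs] using
          norm_integral_le_integral_norm (μ := volume.restrict (Ioc (0:ℝ) 1))
            (f := fun t => (μ {a | t ≤ g a}).toReal - (ν {a | t ≤ g a}).toReal)
    _ ≤ ∫ _t in Ioc (0:ℝ) 1, tvDist μ ν := by
        refine integral_mono_of_nonneg (Eventually.of_forall fun t => abs_nonneg _)
          (integrable_const _) (Eventually.of_forall fun t => abs_le_tvDist μ ν _)
    _ = tvDist μ ν := by simp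

lemma complex_integral_sub_le_tvDist {h : α → ℂ} (hm : Measurable h)
    (hb : ∀ x, ‖h x‖ ≤ 1) (hmass : (μ univ).toReal = (ν univ).toReal) :
    ‖(∫ x, h x ∂μ) - ∫ x, h x ∂ν‖ ≤ 4 * tvDist μ ν := by
  have hint : ∀ (ρ : Measure α) [IsFiniteMeasure ρ], Integrable h ρ := fun ρ _ =>
    (integrable_const (1:ℝ)).mono' hm.aestronglyMeasurable (Eventually.of_forall hb)
  set D : ℂ := (∫ x, h x ∂μ) - ∫ x, h x ∂ν with hD
  have hre : ∀ (u : α → ℝ), Measurable u → (∀ x, |u x| ≤ 1) →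
      |(∫ x, u x ∂μ) - ∫ x, u x ∂ν| ≤ 2 * tvDist μ ν := by
    intro u hu hub
    set g : α → ℝ := fun x => (u x + 1) / 2 with hg
    have h0 : ∀ x, 0 ≤ g x := fun x => by
      have := abs_le.mp (hub x); simp only [hg]; linarith [this.1]
    have h1 : ∀ x, g x ≤ 1 := fun x => by
      have := abs_le.mp (hub x); simp only [hg]; linarith [this.2]
    have huint : ∀ (ρ : Measure α) [IsFiniteMeasure ρ], Integrable u ρ := fun ρ _ =>
      (integrable_const (1:ℝ)).mono' hu.aestronglyMeasurable
        (Eventually.of_forall fun x => by rw [Real.norm_eq_abs]; exact hub x)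
    have hgi : ∀ (ρ : Measure α) [IsFiniteMeasure ρ],
        ∫ x, g x ∂ρ = ((∫ x, u x ∂ρ) + (ρ univ).toReal) / 2 := by
      intro ρ _
      simp only [hg, integral_div, integral_add (huint ρ) (integrable_const 1),
        integral_const, smul_eq_mul, mul_one, measureReal_def]
    have key := integral_sub_le_tvDist μ ν (g := g) ((hu.add measurable_const).div_const 2) h0 h1
    rw [hgi μ, hgi ν, hmass] at key
    have e : ((∫ x, u x ∂μ) + (ν univ).toReal) / 2 - ((∫ x, u x ∂ν) + (ν univ).toReal) / 2
        = ((∫ x, u x ∂μ) - (∫ x, u x ∂ν)) / 2 := by ring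
    rw [e, abs_div, abs_two, div_le_iff₀ (by norm_num : (0:ℝ) < 2)] at key
    linarith
  have hDre : D.re = (∫ x, (h x).re ∂μ) - ∫ x, (h x).re ∂ν := by
    rw [hD, Complex.sub_re, ← RCLike.re_eq_complex_re, ← integral_re (hint μ),
      ← integral_re (hint ν)]
  have hDim : D.im = (∫ x, (h x).im ∂μ) - ∫ x, (h x).im ∂ν := by
    rw [hD, Complex.sub_im, ← RCLike.im_eq_complex_im, ← integral_im (hint μ),
      ← integral_im (hint ν)]
  have hre1 : ∀ x, |(h x).re| ≤ 1 := fun x => le_trans (Complex.abs_re_le_norm _) (hb x)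
  have him1 : ∀ x, |(h x).im| ≤ 1 := fun x => le_trans (Complex.abs_im_le_norm _) (hb x)
  have b1 := hre (fun x => (h x).re) (Complex.measurable_re.comp hm) hre1
  have b2 := hre (fun x => (h x).im) (Complex.measurable_im.comp hm) him1
  calc ‖D‖ ≤ |D.re| + |D.im| := Complex.norm_le_abs_re_add_abs_im D
    _ ≤ 4 * tvDist μ ν := by rw [hDre, hDim]; linarith

section Conv
variable {G : Type*} [Group G] [MeasurableSpace G] [MeasurableMul₂ G]

instance mconv_prob (μ ν : Measure G) [IsProbabilityMeasure μ] [IsProbabilityMeasure ν] :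
    IsProbabilityMeasure (mconv μ ν) :=
  Measure.isProbabilityMeasure_map (measurable_mul.aemeasurable)

instance mconvPow_prob (μ : Measure G) [IsProbabilityMeasure μ] (n : ℕ) :
    IsProbabilityMeasure (mconvPow μ n) := by
  induction n with
  | zero => exact Measure.dirac.isProbabilityMeasure
  | succ n ih => exact mconv_prob _ _

variable (μ : Measure G) [IsProbabilityMeasure μ] {h : G → ℂ} (hm : Measurable h)
  (hb : ∀ g, ‖h g‖ ≤ 1) (hh : ∀ g, h g = ∫ γ, h (g * γ) ∂μ)

include hm hb in
lemma integrable_comp (ρ : Measure G) [IsProbabilityMeasure ρ] (x : G) :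
    Integrable (fun y => h (x * y)) ρ :=
  (integrable_const (1:ℝ)).mono' ((hm.comp (measurable_const_mul x)).aestronglyMeasurable)
    (Eventually.of_forall fun y => hb _)

include hm hb hh in
lemma integral_mconvPow (n : ℕ) : ∀ x : G, ∫ y, h (x * y) ∂(mconvPow μ n) = h x := by
  induction n with
  | zero =>
    intro x
    show ∫ y, h (x * y) ∂(Measure.dirac 1) = h x
    rw [integral_dirac' _ _
      ((show Measurable fun y => h (x * y) from hm.comp (measurable_const_mul x)).stronglyMeasurable),
      mul_one]
  | succ n ih =>
    intro x
    show ∫ y, h (x * y) ∂(((mconvPow μ n).prod μ).map (fun p => p.1 * p.2)) = h x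
    rw [integral_map (measurable_mul : Measurable fun p : G × G => p.1 * p.2).aemeasurable
      (show Measurable fun y => h (x * y) from hm.comp (measurable_const_mul x)).aestronglyMeasurable]
    have hi : Integrable (fun p : G × G => h (x * (p.1 * p.2))) ((mconvPow μ n).prod μ) :=
      (integrable_const (1:ℝ)).mono'
        (((hm.comp (measurable_const_mul x)).comp measurable_mul).aestronglyMeasurable)
        (Eventually.of_forall fun p => hb _)
    rw [integral_prod _ hi]
    have : ∀ a : G, ∫ b, h (x * (a * b)) ∂μ = h (x * a) := by
      intro a
      simp_rw [← mul_assoc]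
      exact (hh (x * a)).symm
    simp_rw [this]
    exact ih x

include hm hb hh in
lemma integral_mconv_theta (θ : Measure G) [IsProbabilityMeasure θ] (n : ℕ) :
    ∫ y, h y ∂(mconv θ (mconvPow μ n)) = ∫ y, h y ∂θ := by
  show ∫ y, h y ∂((θ.prod (mconvPow μ n)).map (fun p => p.1 * p.2)) = _
  rw [integral_map (measurable_mul : Measurable fun p : G × G => p.1 * p.2).aemeasurable
    hm.aestronglyMeasurable]
  have hi : Integrable (fun p : G × G => h (p.1 * p.2)) (θ.prod (mconvPow μ n)) :=
    (integrable_const (1:ℝ)).mono' ((hm.comp measurable_mul).aestronglyMeasurable)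
      (Eventually.of_forall fun p => hb _)
  rw [integral_prod _ hi]
  exact integral_congr_ae (Eventually.of_forall fun a => integral_mconvPow μ hm hb hh n a)

end Conv

lemma isFiniteMeasure_finsum {α ι : Type*} [MeasurableSpace α] (s : Finset ι) (μ : ι → Measure α)
    (h : ∀ i ∈ s, (μ i) Set.univ = 1) : IsFiniteMeasure (∑ i ∈ s, μ i) := by
  constructor
  rw [Measure.finset_sum_apply]
  calc ∑ i ∈ s, (μ i) Set.univ = ∑ _i ∈ s, 1 := Finset.sum_congr rfl h
    _ = s.card := by simp
    _ < ⊤ := by exact_mod_cast ENNReal.natCast_lt_top s.card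


end Aux

/-- if the Cesàro averages `(1/n)‖Σ_{i=1}^n (θ*μ^{*i} − μ^{*i})‖_TV` tend to 0,
then every bounded μ-harmonic function `h` with `‖h‖_∞ ≤ 1` satisfies `(θ*h)(e) = h(e)`. -/
theorem stmt17 {G : Type*} [Group G] [MeasurableSpace G] [MeasurableMul₂ G]
    (μ θ : Measure G) [IsProbabilityMeasure μ] [IsProbabilityMeasure θ]
    (hces : Tendsto (fun n : ℕ => (1 / (n : ℝ)) *
      tvDist (∑ i ∈ Finset.Icc 1 n, mconv θ (mconvPow μ i))
        (∑ i ∈ Finset.Icc 1 n, mconvPow μ i)) atTop (nhds 0)) :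
    ∀ h : G → ℂ, Measurable h → (∀ g, ‖h g‖ ≤ 1) →
      (∀ g, h g = ∫ γ, h (g * γ) ∂μ) →
      (∫ y, h y ∂θ) = h 1 := by
  intro h hm hb hh
  set D : ℂ := (∫ y, h y ∂θ) - h 1 with hD
  have hint : ∀ (ρ : Measure G) [IsProbabilityMeasure ρ], Integrable h ρ := fun ρ _ =>
    (integrable_const (1:ℝ)).mono' hm.aestronglyMeasurable (Eventually.of_forall hb)
  -- key bound for each n ≥ 1
  have key : ∀ n : ℕ, 1 ≤ n → ‖D‖ ≤ 4 * ((1 / (n : ℝ)) *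
      tvDist (∑ i ∈ Finset.Icc 1 n, mconv θ (mconvPow μ i))
        (∑ i ∈ Finset.Icc 1 n, mconvPow μ i)) := by
    intro n hn
    set μ1 : Measure G := ∑ i ∈ Finset.Icc 1 n, mconv θ (mconvPow μ i) with hμ1
    set ν1 : Measure G := ∑ i ∈ Finset.Icc 1 n, mconvPow μ i with hν1
    have card_Icc : (Finset.Icc 1 n).card = n := by rw [Nat.card_Icc]; omega
    haveI i1 : IsFiniteMeasure μ1 :=
      isFiniteMeasure_finsum _ _ (fun i _ => measure_univ)
    haveI i2 : IsFiniteMeasure ν1 :=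
      isFiniteMeasure_finsum _ _ (fun i _ => measure_univ)
    have mass : (μ1 Set.univ).toReal = (ν1 Set.univ).toReal := by
      rw [hμ1, hν1, Measure.finset_sum_apply, Measure.finset_sum_apply]
      simp [measure_univ]
    have int1 : ∫ y, h y ∂μ1 = (n : ℂ) * ∫ y, h y ∂θ := by
      rw [hμ1, integral_finset_sum_measure (fun i _ => hint _)]
      rw [Finset.sum_congr rfl (fun i _ => integral_mconv_theta μ hm hb hh θ i)]
      simp [card_Icc]
    have int2 : ∫ y, h y ∂ν1 = (n : ℂ) * h 1 := by
      rw [hν1, integral_finset_sum_measure (fun i _ => hint _)]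
      have : ∀ i, ∫ y, h y ∂(mconvPow μ i) = h 1 := by
        intro i
        have := integral_mconvPow μ hm hb hh i 1
        simpa using this
      rw [Finset.sum_congr rfl (fun i _ => this i)]
      simp [card_Icc]
    have bnd := complex_integral_sub_le_tvDist μ1 ν1 hm hb mass
    rw [int1, int2, ← mul_sub, ← hD] at bnd
    have hnpos : (0:ℝ) < n := by exact_mod_cast hn
    have : (n:ℝ) * ‖D‖ ≤ 4 * tvDist μ1 ν1 := by
      calc (n:ℝ) * ‖D‖ = ‖(n:ℂ) * D‖ := by
            rw [norm_mul, Complex.norm_natCast]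
        _ ≤ 4 * tvDist μ1 ν1 := bnd
    rw [(by ring : 4 * ((1/(n:ℝ)) * tvDist μ1 ν1) = 4 * tvDist μ1 ν1 / n)]
    exact (le_div_iff₀ hnpos).mpr (by rw [mul_comm]; exact this)
  have hlim : Tendsto (fun n : ℕ => 4 * ((1 / (n : ℝ)) *
      tvDist (∑ i ∈ Finset.Icc 1 n, mconv θ (mconvPow μ i))
        (∑ i ∈ Finset.Icc 1 n, mconvPow μ i))) atTop (nhds 0) := by
    simpa using hces.const_mul 4
  have : ‖D‖ ≤ 0 := ge_of_tendsto hlim (eventually_atTop.mpr ⟨1, fun n hn => key n hn⟩)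
  have : D = 0 := by
    have := norm_eq_zero.mp (le_antisymm this (norm_nonneg _))
    exact this
  exact sub_eq_zero.mp this
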